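/- Pointwise decay of half-line oscillator eigenfunctions away from the turning region: for each n and s there is a constant C_{n,s} such that if |x - η| ≥ ε(x + |η|) (x in the domain, away from the classically allowed annulus), then the normalized eigenfunction satisfies |u_n(x, η)| ≤ C_{n,s}(1 + x + |η|)^{-s}. -/

import Mathlib

open MeasureTheory Set Filter Topology Real

/-- `u` is an L²-normalized eigenfunction of the fibered operator
`L(η) = -d²/dx² + (η - x)²` on `ℝ⁺` with eigenvalue `lam`. -/
def IsFiberEigenfun (η lam : ℝ) (u : ℝ → ℝ) : Prop :=
  ContDiff ℝ 2 u ∧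
  (∀ x : ℝ, 0 ≤ x → -(deriv (deriv u)) x + (η - x) ^ 2 * u x = lam * u x) ∧
  Integrable (fun x => (u x) ^ 2) (volume.restrict (Ioi 0)) ∧
  ∫ x in Ioi (0 : ℝ), (u x) ^ 2 = 1

/-- `lam` is an eigenvalue of `L(η)` on `ℝ⁺` with Dirichlet condition at `0`. -/
def IsFiberDirEV (η lam : ℝ) : Prop := ∃ u, IsFiberEigenfun η lam u ∧ u 0 = 0

/-- `lam` is an eigenvalue of `L(η)` on `ℝ⁺` with Neumann condition at `0`. -/
def IsFiberNeuEV (η lam : ℝ) : Prop := ∃ u, IsFiberEigenfun η lam u ∧ deriv u 0 = 0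

/-- `lam` enumerates, in strictly increasing order, all values satisfying `P`. -/
def EnumeratesEV (P : ℝ → Prop) (lam : ℕ → ℝ) : Prop :=
  StrictMono lam ∧ (∀ n, P (lam n)) ∧ ∀ t, P t → ∃ n, lam n = t

lemma maxprin {l r : ℝ} (h h' h'' : ℝ → ℝ)
    (hd1 : ∀ t ∈ Icc l r, HasDerivAt h (h' t) t)
    (hd2 : ∀ t ∈ Icc l r, HasDerivAt h' (h'' t) t)
    (hconv : ∀ t ∈ Icc l r, 0 < h t → 0 < h'' t)
    (hr : h r ≤ 0) (hl : h l ≤ 0 ∨ 0 ≤ h' l) :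
    ∀ t ∈ Icc l r, h t ≤ 0 := by
  intro t₀ ht₀
  by_contra hpos
  push_neg at hpos
  obtain ⟨hlt₀, ht₀r⟩ := ht₀
  have hch : ContinuousOn h (Icc l r) := fun t ht =>
    ((hd1 t ht).continuousAt).continuousWithinAt
  have hch' : ContinuousOn h' (Icc l r) := fun t ht =>
    ((hd2 t ht).continuousAt).continuousWithinAt
  set S : Set ℝ := Icc t₀ r ∩ h ⁻¹' (Iic 0) with hS
  have hIccsub : Icc t₀ r ⊆ Icc l r := Icc_subset_Icc hlt₀ le_rfl
  have hScl : IsClosed S :=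
    (hch.mono hIccsub).preimage_isClosed_of_isClosed isClosed_Icc isClosed_Iic
  have hSne : S.Nonempty := ⟨r, ⟨ht₀r, le_rfl⟩, hr⟩
  have hSbdd : BddBelow S := ⟨t₀, fun t ht => ht.1.1⟩
  set q := sInf S with hq
  have hqS : q ∈ S := hScl.csInf_mem hSne hSbdd
  have hqle : h q ≤ 0 := hqS.2
  have ht₀q : t₀ < q := by
    rcases lt_or_eq_of_le hqS.1.1 with h1 | h1
    · exact h1
    · exact absurd (h1 ▸ hqle) (not_le.mpr hpos)
  have hqr : q ≤ r := hqS.1.2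
  have hposq : ∀ t, t₀ ≤ t → t < q → 0 < h t := by
    intro t h1 h2
    by_contra hc
    push_neg at hc
    exact absurd (csInf_le hSbdd ⟨⟨h1, le_trans h2.le hqr⟩, hc⟩) (not_le.mpr h2)
  -- strict monotonicity of h' on any [p,q] where h > 0 on (p,q)
  have smono : ∀ p : ℝ, l ≤ p → p < q → (∀ t ∈ Ioo p q, 0 < h t) →
      StrictMonoOn h' (Icc p q) := by
    intro p hlp hpq hposo
    have hsub : Icc p q ⊆ Icc l r := Icc_subset_Icc hlp hqr
    apply strictMonoOn_of_deriv_pos (convex_Icc p q) (hch'.mono hsub)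
    intro x hx
    rw [interior_Icc] at hx
    rw [(hd2 x (hsub (Ioo_subset_Icc_self hx))).deriv]
    exact hconv x (hsub (Ioo_subset_Icc_self hx)) (hposo x hx)
  rcases em (∃ t ∈ Icc l t₀, h t ≤ 0) with ⟨hS'⟩ | hS'
  · -- left zero exists
    set S' : Set ℝ := Icc l t₀ ∩ h ⁻¹' (Iic 0) with hS'def
    have hS'cl : IsClosed S' :=
      (hch.mono (Icc_subset_Icc le_rfl ht₀r)).preimage_isClosed_of_isClosed
        isClosed_Icc isClosed_Iic
    have hS'ne : S'.Nonempty := by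
      obtain ⟨t, ht1, ht2⟩ := ‹∃ t ∈ Icc l t₀, h t ≤ 0›
      exact ⟨t, ht1, ht2⟩
    have hS'bdd : BddAbove S' := ⟨t₀, fun t ht => ht.1.2⟩
    set p := sSup S' with hp
    have hpS' : p ∈ S' := hS'cl.csSup_mem hS'ne hS'bdd
    have hple : h p ≤ 0 := hpS'.2
    have hpt₀ : p < t₀ := by
      rcases lt_or_eq_of_le hpS'.1.2 with h1 | h1
      · exact h1
      · exact absurd (h1 ▸ hple) (not_le.mpr hpos)
    have hlp : l ≤ p := hpS'.1.1
    have hposp : ∀ t, p < t → t ≤ t₀ → 0 < h t := by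
      intro t h1 h2
      by_contra hc
      push_neg at hc
      exact absurd (le_csSup hS'bdd ⟨⟨le_trans hlp h1.le, h2⟩, hc⟩) (not_le.mpr h1)
    have hposo : ∀ t ∈ Ioo p q, 0 < h t := by
      intro t ht
      rcases le_or_gt t t₀ with h1 | h1
      · exact hposp t ht.1 h1
      · exact hposq t h1.le ht.2
    have hsm := smono p hlp (lt_trans hpt₀ ht₀q) hposo
    have hsub : Icc p q ⊆ Icc l r := Icc_subset_Icc hlp hqr
    -- MVT on [p, t₀]
    obtain ⟨ξ₁, hξ₁, hξ₁v⟩ := exists_hasDerivAt_eq_slope h h' hpt₀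
      (hch.mono (Icc_subset_Icc hlp (le_trans ht₀r le_rfl)))
      (fun x hx => hd1 x (hsub ⟨hx.1.le, le_trans hx.2.le ht₀q.le⟩))
    -- MVT on [t₀, q]
    obtain ⟨ξ₂, hξ₂, hξ₂v⟩ := exists_hasDerivAt_eq_slope h h' ht₀q
      (hch.mono (Icc_subset_Icc hlt₀ hqr))
      (fun x hx => hd1 x (hsub ⟨le_trans hpt₀.le hx.1.le, hx.2.le⟩))
    have h1 : 0 < h' ξ₁ := by
      rw [hξ₁v]
      apply div_pos (by linarith) (by linarith [hξ₁.1, hξ₁.2])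
    have h2 : h' ξ₂ < 0 := by
      rw [hξ₂v]
      apply div_neg_of_neg_of_pos (by linarith) (by linarith [hξ₂.1, hξ₂.2])
    have : h' ξ₁ < h' ξ₂ :=
      hsm ⟨hξ₁.1.le, le_trans hξ₁.2.le ht₀q.le⟩ ⟨le_trans hpt₀.le hξ₂.1.le, hξ₂.2.le⟩
        (lt_trans hξ₁.2 hξ₂.1)
    linarith
  · -- h > 0 on all of [l, t₀]
    push_neg at hS'
    have hposl : ∀ t ∈ Icc l t₀, 0 < h t := hS'
    have hl' : 0 ≤ h' l := by
      rcases hl with h1 | h1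
      · exact absurd h1 (not_le.mpr (hposl l ⟨le_rfl, hlt₀⟩))
      · exact h1
    have hlq : l < q := lt_of_le_of_lt hlt₀ ht₀q
    have hposo : ∀ t ∈ Ioo l q, 0 < h t := by
      intro t ht
      rcases le_or_gt t t₀ with h1 | h1
      · exact hposl t ⟨ht.1.le, h1⟩
      · exact hposq t h1.le ht.2
    have hsm := smono l le_rfl hlq hposo
    obtain ⟨ξ, hξ, hξv⟩ := exists_hasDerivAt_eq_slope h h' hlq
      (hch.mono (Icc_subset_Icc le_rfl hqr))
      (fun x hx => hd1 x ⟨hx.1.le, le_trans hx.2.le hqr⟩)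
    have h2 : h' ξ < 0 := by
      rw [hξv]
      apply div_neg_of_neg_of_pos (by linarith [hposl l ⟨le_rfl, hlt₀⟩]) (by linarith [hξ.1, hξ.2])
    have : h' l < h' ξ := hsm ⟨le_rfl, hlq.le⟩ ⟨hξ.1.le, hξ.2.le⟩ hξ.1
    linarith

lemma eig_derivs {v : ℝ → ℝ} (hc : ContDiff ℝ 2 v) :
    Differentiable ℝ v ∧ Differentiable ℝ (deriv v) ∧ Continuous (deriv v)
      ∧ Continuous (deriv (deriv v)) := by
  have h2 : ContDiff ℝ ((1 : ℕ∞) + 1) v := by norm_num; exact hc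
  rw [contDiff_succ_iff_deriv] at h2
  exact ⟨h2.1, (contDiff_one_iff_deriv.mp h2.2.2).1, h2.2.2.continuous,
    (contDiff_one_iff_deriv.mp h2.2.2).2⟩

lemma eig_eq {η lam : ℝ} {v : ℝ → ℝ} (hv : IsFiberEigenfun η lam v) :
    ∀ t, 0 ≤ t → deriv (deriv v) t = ((η - t) ^ 2 - lam) * v t := by
  intro t ht
  have h := hv.2.1 t ht
  linear_combination -h

lemma int_sq_le_one {v : ℝ → ℝ}
    (hint : Integrable (fun x => (v x) ^ 2) (volume.restrict (Ioi 0)))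
    (hnorm : ∫ x in Ioi (0 : ℝ), (v x) ^ 2 = 1) {a b : ℝ} (ha : 0 ≤ a) :
    ∫ t in a..b, (v t) ^ 2 ≤ 1 := by
  rcases le_or_gt b a with hba | hab
  · rw [intervalIntegral.integral_of_ge hba]
    have : 0 ≤ ∫ t in Ioc b a, (v t) ^ 2 :=
      setIntegral_nonneg measurableSet_Ioc (fun t _ => sq_nonneg _)
    linarith
  · rw [intervalIntegral.integral_of_le hab.le]
    rw [← hnorm]
    apply setIntegral_mono_set hint
    · filter_upwards with t using sq_nonneg _
    · apply HasSubset.Subset.eventuallyLE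
      intro t ht
      exact lt_of_lt_of_le (lt_of_le_of_lt ha ht.1) le_rfl

lemma grad_bound {η lam C : ℝ} {v : ℝ → ℝ} (hv : IsFiberEigenfun η lam v)
    (hbc : v 0 * deriv v 0 = 0) (hlam : lam ≤ C) {T : ℝ} (hT : 0 ≤ T) :
    ∫ t in (0:ℝ)..T, (deriv v t) ^ 2 ≤ v T * deriv v T + max C 0 := by
  obtain ⟨hdv, hdv', hcv', hcv''⟩ := eig_derivs hv.1
  have hcv : Continuous v := hv.1.continuous
  have hd1 : ∀ t, HasDerivAt v (deriv v t) t := fun t => (hdv t).hasDerivAt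
  have hd2 : ∀ t, HasDerivAt (deriv v) (deriv (deriv v) t) t := fun t => (hdv' t).hasDerivAt
  have hmul : ∀ t : ℝ, HasDerivAt (fun s => v s * deriv v s)
      ((deriv v t) ^ 2 + v t * deriv (deriv v) t) t := by
    intro t
    have : HasDerivAt (fun s => v s * deriv v s)
        (deriv v t * deriv v t + v t * deriv (deriv v) t) t := (hd1 t).mul (hd2 t)
    simpa [pow_two] using this
  have hint1 : IntervalIntegrable (fun t => (deriv v t) ^ 2) volume 0 T :=
    (hcv'.pow 2).intervalIntegrable _ _
  have hint2 : IntervalIntegrable (fun t => v t * deriv (deriv v) t) volume 0 T :=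
    (hcv.mul hcv'').intervalIntegrable _ _
  have hFTC : ∫ t in (0:ℝ)..T, ((deriv v t) ^ 2 + v t * deriv (deriv v) t)
      = v T * deriv v T - v 0 * deriv v 0 :=
    intervalIntegral.integral_eq_sub_of_hasDerivAt (fun t _ => hmul t) (hint1.add hint2)
  rw [intervalIntegral.integral_add hint1 hint2, hbc, sub_zero] at hFTC
  set Iq := ∫ t in (0:ℝ)..T, v t * deriv (deriv v) t with hIq
  have hIqeq : Iq = ∫ t in (0:ℝ)..T, ((η - t) ^ 2 - lam) * (v t) ^ 2 := by
    apply intervalIntegral.integral_congr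
    intro t ht
    rw [uIcc_of_le hT] at ht
    simp only
    rw [eig_eq hv t ht.1]
    ring
  have hint3 : IntervalIntegrable (fun t => ((η - t) ^ 2 - lam) * (v t) ^ 2) volume 0 T := by
    exact ((((continuous_const.sub continuous_id).pow 2).sub continuous_const).mul
      (hcv.pow 2)).intervalIntegrable _ _
  have hint4 : IntervalIntegrable (fun t => (-lam) * (v t) ^ 2) volume 0 T :=
    ((continuous_const.mul (hcv.pow 2))).intervalIntegrable _ _
  have e2 : ∫ t in (0:ℝ)..T, (-lam) * (v t) ^ 2 ≤ Iq := by
    rw [hIqeq]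
    apply intervalIntegral.integral_mono_on hT hint4 hint3
    intro t ht
    nlinarith [sq_nonneg (η - t), sq_nonneg (v t)]
  have hintsq : IntervalIntegrable (fun t => (v t) ^ 2) volume 0 T :=
    (hcv.pow 2).intervalIntegrable _ _
  rw [intervalIntegral.integral_const_mul] at e2
  set I := ∫ t in (0:ℝ)..T, (v t) ^ 2 with hI
  have hI0 : 0 ≤ I := intervalIntegral.integral_nonneg hT (fun t _ => sq_nonneg _)
  have hI1 : I ≤ 1 := int_sq_le_one hv.2.2.1 hv.2.2.2 le_rfl
  have e3 : lam * I ≤ max C 0 := by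
    rcases le_or_gt lam 0 with h1 | h1
    · exact le_trans (mul_nonpos_of_nonpos_of_nonneg h1 hI0) (le_max_right _ _)
    · calc lam * I ≤ lam * 1 := by nlinarith
      _ ≤ max C 0 := by rw [mul_one]; exact le_trans hlam (le_max_left _ _)
  linarith

lemma tail_mono {η lam : ℝ} {v : ℝ → ℝ} (hv : IsFiberEigenfun η lam v) {x₁ : ℝ}
    (hx₁ : 0 ≤ x₁) (hq : ∀ t, x₁ ≤ t → lam ≤ (η - t) ^ 2) :
    ∀ t, x₁ ≤ t → v t * deriv v t ≤ 0 := by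
  obtain ⟨hdv, hdv', hcv', hcv''⟩ := eig_derivs hv.1
  have hcv : Continuous v := hv.1.continuous
  have hd1 : ∀ t, HasDerivAt v (deriv v t) t := fun t => (hdv t).hasDerivAt
  have hd2 : ∀ t, HasDerivAt (deriv v) (deriv (deriv v) t) t := fun t => (hdv' t).hasDerivAt
  set W' : ℝ → ℝ := fun t => 2 * v t * deriv v t with hW'
  have hW'd : ∀ t : ℝ, HasDerivAt W' (2 * (deriv v t) ^ 2 + 2 * v t * deriv (deriv v) t) t := by
    intro t
    have h0 : HasDerivAt (fun s => v s * deriv v s)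
        (deriv v t * deriv v t + v t * deriv (deriv v) t) t := (hd1 t).mul (hd2 t)
    have : HasDerivAt (fun y => 2 * (v y * deriv v y))
        (2 * (deriv v t * deriv v t + v t * deriv (deriv v) t)) t := h0.const_mul (2 : ℝ)
    convert this using 1
    · funext s; simp [hW']; ring
    · ring
  have hW'c : Continuous W' := by
    apply Continuous.mul
    · exact continuous_const.mul hcv
    · exact hcv'
  -- W' is monotone on [x₁, ∞)
  have hmono : MonotoneOn W' (Ici x₁) := by
    apply monotoneOn_of_deriv_nonneg (convex_Ici x₁) hW'c.continuousOn
    · intro t _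
      exact ((hW'd t).differentiableAt).differentiableWithinAt
    · intro t ht
      rw [interior_Ici] at ht
      rw [(hW'd t).deriv, eig_eq hv t (le_trans hx₁ (le_of_lt ht))]
      have h1 : lam ≤ (η - t) ^ 2 := hq t ht.le
      nlinarith [sq_nonneg (deriv v t), sq_nonneg (v t)]
  intro t₀ ht₀
  by_contra hc
  push_neg at hc
  set m := W' t₀ with hm
  have hmpos : 0 < m := by simp [hm, hW']; nlinarith
  -- pointwise lower bound for W on [t₀, ∞)
  have hWlow : ∀ t, t₀ ≤ t → m * (t - t₀) ≤ (v t) ^ 2 := by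
    intro t ht
    have hFTC : ∫ s in t₀..t, W' s = (v t) ^ 2 - (v t₀) ^ 2 := by
      apply intervalIntegral.integral_eq_sub_of_hasDerivAt
      · intro s _
        have := ((hd1 s).mul (hd1 s)).const_mul (1:ℝ)
        have h2 : HasDerivAt (fun u => (v u) ^ 2) (W' s) s := by
          have : HasDerivAt (fun u => (v u) ^ 2) ((2:ℕ) * v s ^ (2 - 1) * deriv v s) s :=
            (hd1 s).pow 2
          convert this using 1
          simp only [hW']
          push_cast
          ring
        exact h2
      · exact (hW'c.intervalIntegrable _ _)
    have hlow : ∫ s in t₀..t, (m : ℝ) ≤ ∫ s in t₀..t, W' s := by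
      apply intervalIntegral.integral_mono_on ht
        (intervalIntegrable_const) (hW'c.intervalIntegrable _ _)
      intro s hs
      exact hmono (mem_Ici.mpr ht₀) (mem_Ici.mpr (le_trans ht₀ hs.1)) hs.1
    rw [intervalIntegral.integral_const, smul_eq_mul] at hlow
    nlinarith [sq_nonneg (v t₀)]
  -- contradiction with ∫ = 1
  set T := t₀ + (2 / m + 2) with hT
  have hTt₀ : t₀ ≤ T := by
    have : 0 < 2 / m := by positivity
    simp [hT]; linarith
  have hint : ∫ s in t₀..T, (v s) ^ 2 ≤ 1 :=
    int_sq_le_one hv.2.2.1 hv.2.2.2 (le_trans hx₁ ht₀)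
  have hlow2 : ∫ s in t₀..T, m * (s - t₀) ≤ ∫ s in t₀..T, (v s) ^ 2 := by
    apply intervalIntegral.integral_mono_on hTt₀
    · apply Continuous.intervalIntegrable
      exact continuous_const.mul (continuous_id.sub continuous_const)
    · exact ((hcv.pow 2).intervalIntegrable _ _)
    · intro s hs
      exact hWlow s hs.1
  have hcomp : ∫ s in t₀..T, m * (s - t₀) = m * (T - t₀) ^ 2 / 2 := by
    have h1 : ∫ s in t₀..T, m * (s - t₀)
        = m * ((∫ s in t₀..T, s) - (∫ s in t₀..T, (t₀ : ℝ))) := by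
      rw [← intervalIntegral.integral_sub (Continuous.intervalIntegrable (by continuity) _ _)
        intervalIntegrable_const, intervalIntegral.integral_const_mul]
    rw [h1, integral_id, intervalIntegral.integral_const, smul_eq_mul]
    ring
  rw [hcomp] at hlow2
  have : m * (T - t₀) ^ 2 / 2 = 2 / m + 4 + 2 * m := by
    rw [hT]; field_simp
    ring
  nlinarith [div_pos (by norm_num : (0:ℝ) < 2) hmpos]

lemma sup_bound {η lam C : ℝ} {v : ℝ → ℝ} (hv : IsFiberEigenfun η lam v)
    (hbc : v 0 * deriv v 0 = 0) (hlam : lam ≤ C) :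
    ∀ x, 0 ≤ x → (v x) ^ 2 ≤ max C 0 + 2 := by
  obtain ⟨hdv, hdv', hcv', hcv''⟩ := eig_derivs hv.1
  have hcv : Continuous v := hv.1.continuous
  have hd1 : ∀ t, HasDerivAt v (deriv v t) t := fun t => (hdv t).hasDerivAt
  intro x hx
  set Cp := max C 0 with hCp
  have hCp0 : 0 ≤ Cp := le_max_right _ _
  set x₁ := max 0 η + Real.sqrt Cp with hx₁def
  have hx₁0 : 0 ≤ x₁ := add_nonneg (le_max_left _ _) (Real.sqrt_nonneg _)
  have hq : ∀ t, x₁ ≤ t → lam ≤ (η - t) ^ 2 := by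
    intro t ht
    have h1 : Real.sqrt Cp ≤ t - η := by
      have : η ≤ max 0 η := le_max_right _ _
      linarith [ht, this]
    have h2 : (Real.sqrt Cp) ^ 2 ≤ (t - η) ^ 2 :=
      pow_le_pow_left₀ (Real.sqrt_nonneg _) h1 2
    rw [Real.sq_sqrt hCp0] at h2
    have : (η - t) ^ 2 = (t - η) ^ 2 := by ring
    rw [this]
    exact le_trans (le_trans hlam (le_max_left _ _)) h2
  have htail := tail_mono hv hx₁0 hq
  set T := max (x + 1) x₁ with hTdef
  have hT0 : 0 ≤ T := le_trans hx₁0 (le_max_right _ _)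
  have hgrad : ∫ t in (0:ℝ)..T, (deriv v t) ^ 2 ≤ Cp := by
    have h1 := grad_bound hv hbc hlam hT0
    have h2 : v T * deriv v T ≤ 0 := htail T (le_max_right _ _)
    linarith
  -- find y in [x, x+1] with small value
  have hy : ∃ y ∈ Icc x (x + 1), (v y) ^ 2 ≤ 1 := by
    by_contra hcon
    push_neg at hcon
    have h1 : ∫ t in x..(x+1), (1:ℝ) ≤ ∫ t in x..(x+1), (v t) ^ 2 := by
      apply intervalIntegral.integral_mono_on (by linarith) intervalIntegrable_const
        ((hcv.pow 2).intervalIntegrable _ _)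
      intro t ht
      exact (hcon t ht).le
    rw [intervalIntegral.integral_const, smul_eq_mul] at h1
    have h2 : ∫ t in x..(x+1), (v t) ^ 2 ≤ 1 := int_sq_le_one hv.2.2.1 hv.2.2.2 hx
    -- h1 : (x+1-x) * 1 ≤ ∫ ≤ 1; but strictness needed: use min attained
    obtain ⟨y, hy1, hy2⟩ := (isCompact_Icc (a := x) (b := x+1)).exists_isMinOn
      (nonempty_Icc.mpr (by linarith)) ((hcv.pow 2).continuousOn)
    have h3 : ∀ t ∈ Icc x (x+1), (v y) ^ 2 ≤ (v t) ^ 2 := fun t ht => hy2 ht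
    have h4 : ∫ t in x..(x+1), ((v y) ^ 2 : ℝ) ≤ ∫ t in x..(x+1), (v t) ^ 2 := by
      apply intervalIntegral.integral_mono_on (by linarith) intervalIntegrable_const
        ((hcv.pow 2).intervalIntegrable _ _)
      exact h3
    rw [intervalIntegral.integral_const, smul_eq_mul] at h4
    have h5 : 1 < (v y) ^ 2 := hcon y hy1
    have : (x + 1 - x) * (v y) ^ 2 = (v y) ^ 2 := by ring
    linarith [h4, h2, h5, this ▸ h4]
  obtain ⟨y, hyIcc, hyle⟩ := hy
  -- W x ≤ W y + ∫ |W'|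
  have hFTC : ∫ s in x..y, 2 * v s * deriv v s = (v y) ^ 2 - (v x) ^ 2 := by
    apply intervalIntegral.integral_eq_sub_of_hasDerivAt
    · intro s _
      have : HasDerivAt (fun u => (v u) ^ 2) ((2:ℕ) * v s ^ (2 - 1) * deriv v s) s :=
        (hd1 s).pow 2
      refine this.congr_deriv ?_
      push_cast
      ring
    · exact ((continuous_const.mul hcv).mul hcv').intervalIntegrable _ _
  have hbound : -(∫ s in x..y, 2 * v s * deriv v s) ≤ 1 + Cp := by
    have h1 : ∫ s in x..y, -(2 * v s * deriv v s) ≤ ∫ s in x..y, ((v s) ^ 2 + (deriv v s) ^ 2) := by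
      apply intervalIntegral.integral_mono_on hyIcc.1
      · exact (((continuous_const.mul hcv).mul hcv').neg).intervalIntegrable _ _
      · exact ((hcv.pow 2).add (hcv'.pow 2)).intervalIntegrable _ _
      · intro s _
        nlinarith [sq_nonneg (v s + deriv v s)]
    rw [intervalIntegral.integral_neg] at h1
    have h2 : ∫ s in x..y, ((v s) ^ 2 + (deriv v s) ^ 2)
        = (∫ s in x..y, (v s) ^ 2) + ∫ s in x..y, (deriv v s) ^ 2 :=
      intervalIntegral.integral_add ((hcv.pow 2).intervalIntegrable _ _)
        ((hcv'.pow 2).intervalIntegrable _ _)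
    have h3 : ∫ s in x..y, (v s) ^ 2 ≤ 1 := int_sq_le_one hv.2.2.1 hv.2.2.2 hx
    have h4 : ∫ s in x..y, (deriv v s) ^ 2 ≤ ∫ t in (0:ℝ)..T, (deriv v t) ^ 2 := by
      apply intervalIntegral.integral_mono_interval hx hyIcc.1
        (le_trans hyIcc.2 (le_max_left _ _))
      · filter_upwards with t using sq_nonneg _
      · exact ((hcv'.pow 2).intervalIntegrable _ _)
    linarith
  nlinarith [hFTC, hbound, hyle]

lemma hasDerivAt_exp_lin (a b t : ℝ) :
    HasDerivAt (fun s => Real.exp (a * s + b)) (a * Real.exp (a * t + b)) t := by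
  have h1 : HasDerivAt (fun s : ℝ => a * s + b) a t := by
    simpa using ((hasDerivAt_id t).const_mul a).add_const b
  simpa [mul_comm] using h1.exp

lemma right_decay {η lam : ℝ} {v : ℝ → ℝ} (hv : IsFiberEigenfun η lam v)
    {B2 d x₀ : ℝ} (hB : ∀ t, 0 ≤ t → (v t) ^ 2 ≤ B2) (hd : 0 < d) (hx₀ : 0 ≤ x₀)
    (hq : ∀ t, x₀ ≤ t → lam + d ^ 2 ≤ (η - t) ^ 2) :
    ∀ x, x₀ ≤ x → (v x) ^ 2 ≤ B2 * Real.exp (-d * (x - x₀)) := by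
  obtain ⟨hdv, hdv', hcv', hcv''⟩ := eig_derivs hv.1
  have hcv : Continuous v := hv.1.continuous
  have hd1v : ∀ t, HasDerivAt v (deriv v t) t := fun t => (hdv t).hasDerivAt
  have hd2v : ∀ t, HasDerivAt (deriv v) (deriv (deriv v) t) t := fun t => (hdv' t).hasDerivAt
  have hB2 : 0 ≤ B2 := le_trans (sq_nonneg (v 0)) (hB 0 le_rfl)
  intro x hx
  have hx0 : 0 ≤ x := le_trans hx₀ hx
  have key : ∀ T, x ≤ T →
      (v x) ^ 2 ≤ B2 * (Real.exp (-d * x + d * x₀) + Real.exp (d * x + -(d * T))) := by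
    intro T hxT
    set h : ℝ → ℝ := fun t => (v t) ^ 2
      - B2 * (Real.exp (-d * t + d * x₀) + Real.exp (d * t + -(d * T))) with hh
    set h' : ℝ → ℝ := fun t => 2 * v t * deriv v t
      - B2 * ((-d) * Real.exp (-d * t + d * x₀) + d * Real.exp (d * t + -(d * T))) with hh'
    set h'' : ℝ → ℝ := fun t => 2 * (deriv v t) ^ 2 + 2 * ((η - t) ^ 2 - lam) * (v t) ^ 2
      - B2 * (d ^ 2 * Real.exp (-d * t + d * x₀) + d ^ 2 * Real.exp (d * t + -(d * T))) with hh''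
    have hder1 : ∀ t ∈ Icc x₀ T, HasDerivAt h (h' t) t := by
      intro t _
      have hW : HasDerivAt (fun s => (v s) ^ 2) (2 * v t * deriv v t) t := by
        have : HasDerivAt (fun u => (v u) ^ 2) ((2:ℕ) * v t ^ (2 - 1) * deriv v t) t :=
          (hd1v t).pow 2
        convert this using 1
        push_cast; ring
      have hψ := ((hasDerivAt_exp_lin (-d) (d * x₀) t).add
        (hasDerivAt_exp_lin d (-(d * T)) t)).const_mul B2
      exact hW.sub hψ
    have hder2 : ∀ t ∈ Icc x₀ T, HasDerivAt h' (h'' t) t := by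
      intro t ht
      have ht0 : 0 ≤ t := le_trans hx₀ ht.1
      have hW' : HasDerivAt (fun s => 2 * v s * deriv v s)
          (2 * (deriv v t) ^ 2 + 2 * ((η - t) ^ 2 - lam) * (v t) ^ 2) t := by
        have h0 : HasDerivAt (fun s => v s * deriv v s)
            (deriv v t * deriv v t + v t * deriv (deriv v) t) t := (hd1v t).mul (hd2v t)
        have h1 : HasDerivAt (fun y => 2 * (v y * deriv v y))
            (2 * (deriv v t * deriv v t + v t * deriv (deriv v) t)) t := h0.const_mul (2 : ℝ)
        have h2 : (2:ℝ) * (deriv v t * deriv v t + v t * deriv (deriv v) t)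
            = 2 * (deriv v t) ^ 2 + 2 * ((η - t) ^ 2 - lam) * (v t) ^ 2 := by
          rw [eig_eq hv t ht0]; ring
        rw [h2] at h1
        convert h1 using 1
        funext s; ring
      have hψ' := (((hasDerivAt_exp_lin (-d) (d * x₀) t).const_mul (-d)).add
        ((hasDerivAt_exp_lin d (-(d * T)) t).const_mul d)).const_mul B2
      have := hW'.sub hψ'
      refine this.congr_deriv ?_
      simp only [hh'']
      ring
    have hconv : ∀ t ∈ Icc x₀ T, 0 < h t → 0 < h'' t := by
      intro t ht hpos
      simp only [hh] at hpos
      simp only [hh'']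
      have hq' := hq t ht.1
      have hP : 0 ≤ B2 * (Real.exp (-d * t + d * x₀) + Real.exp (d * t + -(d * T))) := by
        positivity
      have h1 : d ^ 2 * (B2 * (Real.exp (-d * t + d * x₀) + Real.exp (d * t + -(d * T))))
          < d ^ 2 * (v t) ^ 2 := by
        apply mul_lt_mul_of_pos_left (by linarith) (pow_pos hd 2)
      have h2 : (2 * d ^ 2) * (v t) ^ 2 ≤ (2 * ((η - t) ^ 2 - lam)) * (v t) ^ 2 := by
        apply mul_le_mul_of_nonneg_right (by linarith) (sq_nonneg _)
      have h3 : 0 ≤ d ^ 2 * (B2 * (Real.exp (-d * t + d * x₀) + Real.exp (d * t + -(d * T)))) :=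
        mul_nonneg (sq_nonneg _) hP
      nlinarith [sq_nonneg (deriv v t)]
    have hendT : h T ≤ 0 := by
      simp only [hh]
      have h1 : Real.exp (d * T + -(d * T)) = 1 := by
        rw [show d * T + -(d * T) = 0 by ring, Real.exp_zero]
      rw [h1]
      have h2 : 0 ≤ Real.exp (-d * T + d * x₀) := (Real.exp_pos _).le
      have h3 := hB T (le_trans hx0 hxT)
      nlinarith
    have hendx₀ : h x₀ ≤ 0 := by
      simp only [hh]
      have h1 : Real.exp (-d * x₀ + d * x₀) = 1 := by
        rw [show -d * x₀ + d * x₀ = 0 by ring, Real.exp_zero]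
      rw [h1]
      have h2 : 0 ≤ Real.exp (d * x₀ + -(d * T)) := (Real.exp_pos _).le
      have h3 := hB x₀ hx₀
      nlinarith
    have := maxprin h h' h'' hder1 hder2 hconv hendT (Or.inl hendx₀) x ⟨hx, hxT⟩
    simp only [hh] at this
    linarith
  -- let T → ∞
  have hlim : Tendsto (fun T => B2 * (Real.exp (-d * x + d * x₀) + Real.exp (d * x + -(d * T))))
      atTop (nhds (B2 * (Real.exp (-d * x + d * x₀) + 0))) := by
    apply Tendsto.const_mul
    apply Tendsto.add tendsto_const_nhds
    apply Real.tendsto_exp_atBot.comp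
    apply Filter.tendsto_atBot_add_const_left
    exact tendsto_neg_atTop_atBot.comp (Tendsto.const_mul_atTop hd tendsto_id)
  have hfin : (v x) ^ 2 ≤ B2 * (Real.exp (-d * x + d * x₀) + 0) :=
    ge_of_tendsto hlim (eventually_atTop.mpr ⟨x, key⟩)
  calc (v x) ^ 2 ≤ B2 * (Real.exp (-d * x + d * x₀) + 0) := hfin
    _ = B2 * Real.exp (-d * (x - x₀)) := by rw [add_zero]; ring_nf

lemma left_decay {η lam : ℝ} {v : ℝ → ℝ} (hv : IsFiberEigenfun η lam v)
    (hbc : v 0 = 0 ∨ deriv v 0 = 0)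
    {B2 d x₁ : ℝ} (hB : ∀ t, 0 ≤ t → (v t) ^ 2 ≤ B2) (hd : 0 < d)
    (hq : ∀ t, 0 ≤ t → t ≤ x₁ → lam + d ^ 2 ≤ (η - t) ^ 2) :
    ∀ x, 0 ≤ x → x ≤ x₁ → (v x) ^ 2 ≤ 2 * B2 * Real.exp (-d * (x₁ - x)) := by
  obtain ⟨hdv, hdv', hcv', hcv''⟩ := eig_derivs hv.1
  have hcv : Continuous v := hv.1.continuous
  have hd1v : ∀ t, HasDerivAt v (deriv v t) t := fun t => (hdv t).hasDerivAt
  have hd2v : ∀ t, HasDerivAt (deriv v) (deriv (deriv v) t) t := fun t => (hdv' t).hasDerivAt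
  have hB2 : 0 ≤ B2 := le_trans (sq_nonneg (v 0)) (hB 0 le_rfl)
  intro x hx0 hxx₁
  have hx₁0 : 0 ≤ x₁ := le_trans hx0 hxx₁
  set h : ℝ → ℝ := fun t => (v t) ^ 2
    - B2 * (Real.exp (d * t + -(d * x₁)) + Real.exp (-d * t + -(d * x₁))) with hh
  set h' : ℝ → ℝ := fun t => 2 * v t * deriv v t
    - B2 * (d * Real.exp (d * t + -(d * x₁)) + (-d) * Real.exp (-d * t + -(d * x₁))) with hh'
  set h'' : ℝ → ℝ := fun t => 2 * (deriv v t) ^ 2 + 2 * ((η - t) ^ 2 - lam) * (v t) ^ 2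
    - B2 * (d ^ 2 * Real.exp (d * t + -(d * x₁)) + d ^ 2 * Real.exp (-d * t + -(d * x₁))) with hh''
  have hder1 : ∀ t ∈ Icc (0:ℝ) x₁, HasDerivAt h (h' t) t := by
    intro t _
    have hW : HasDerivAt (fun s => (v s) ^ 2) (2 * v t * deriv v t) t := by
      have : HasDerivAt (fun u => (v u) ^ 2) ((2:ℕ) * v t ^ (2 - 1) * deriv v t) t :=
        (hd1v t).pow 2
      convert this using 1
      push_cast; ring
    have hψ := ((hasDerivAt_exp_lin d (-(d * x₁)) t).add
      (hasDerivAt_exp_lin (-d) (-(d * x₁)) t)).const_mul B2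
    exact hW.sub hψ
  have hder2 : ∀ t ∈ Icc (0:ℝ) x₁, HasDerivAt h' (h'' t) t := by
    intro t ht
    have hW' : HasDerivAt (fun s => 2 * v s * deriv v s)
        (2 * (deriv v t) ^ 2 + 2 * ((η - t) ^ 2 - lam) * (v t) ^ 2) t := by
      have h0 : HasDerivAt (fun s => v s * deriv v s)
          (deriv v t * deriv v t + v t * deriv (deriv v) t) t := (hd1v t).mul (hd2v t)
      have h1 : HasDerivAt (fun y => 2 * (v y * deriv v y))
          (2 * (deriv v t * deriv v t + v t * deriv (deriv v) t)) t := h0.const_mul (2 : ℝ)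
      have h2 : (2:ℝ) * (deriv v t * deriv v t + v t * deriv (deriv v) t)
          = 2 * (deriv v t) ^ 2 + 2 * ((η - t) ^ 2 - lam) * (v t) ^ 2 := by
        rw [eig_eq hv t ht.1]; ring
      rw [h2] at h1
      convert h1 using 1
      funext s; ring
    have hψ' := (((hasDerivAt_exp_lin d (-(d * x₁)) t).const_mul d).add
      ((hasDerivAt_exp_lin (-d) (-(d * x₁)) t).const_mul (-d))).const_mul B2
    have := hW'.sub hψ'
    refine this.congr_deriv ?_
    simp only [hh'']
    ring
  have hconv : ∀ t ∈ Icc (0:ℝ) x₁, 0 < h t → 0 < h'' t := by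
    intro t ht hpos
    simp only [hh] at hpos
    simp only [hh'']
    have hq' := hq t ht.1 ht.2
    have hP : 0 ≤ B2 * (Real.exp (d * t + -(d * x₁)) + Real.exp (-d * t + -(d * x₁))) := by
      positivity
    have h1 : d ^ 2 * (B2 * (Real.exp (d * t + -(d * x₁)) + Real.exp (-d * t + -(d * x₁))))
        < d ^ 2 * (v t) ^ 2 := by
      apply mul_lt_mul_of_pos_left (by linarith) (pow_pos hd 2)
    have h2 : (2 * d ^ 2) * (v t) ^ 2 ≤ (2 * ((η - t) ^ 2 - lam)) * (v t) ^ 2 := by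
      apply mul_le_mul_of_nonneg_right (by linarith) (sq_nonneg _)
    have h3 : 0 ≤ d ^ 2 * (B2 * (Real.exp (d * t + -(d * x₁)) + Real.exp (-d * t + -(d * x₁)))) :=
      mul_nonneg (sq_nonneg _) hP
    nlinarith [sq_nonneg (deriv v t)]
  have hendr : h x₁ ≤ 0 := by
    simp only [hh]
    have h1 : Real.exp (d * x₁ + -(d * x₁)) = 1 := by
      rw [show d * x₁ + -(d * x₁) = 0 by ring, Real.exp_zero]
    rw [h1]
    have h2 : 0 ≤ Real.exp (-d * x₁ + -(d * x₁)) := (Real.exp_pos _).le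
    have h3 := hB x₁ hx₁0
    nlinarith
  have hendl : h 0 ≤ 0 ∨ 0 ≤ h' 0 := by
    rcases hbc with hD | hN
    · left
      simp only [hh, hD]
      have h2 : 0 ≤ Real.exp (d * 0 + -(d * x₁)) := (Real.exp_pos _).le
      have h3 : 0 ≤ Real.exp (-d * 0 + -(d * x₁)) := (Real.exp_pos _).le
      nlinarith
    · right
      simp only [hh', hN]
      have : d * 0 + -(d * x₁) = -d * 0 + -(d * x₁) := by ring
      rw [this]
      ring_nf
      exact le_rfl
  have := maxprin h h' h'' hder1 hder2 hconv hendr hendl x ⟨hx0, hxx₁⟩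
  simp only [hh] at this
  have hone : Real.exp (-d * x + -(d * x₁)) ≤ Real.exp (d * x + -(d * x₁)) := by
    apply Real.exp_le_exp.mpr
    nlinarith
  have heq : Real.exp (d * x + -(d * x₁)) = Real.exp (-d * (x₁ - x)) := by
    congr 1; ring
  nlinarith [this, hone, heq ▸ le_rfl (a := Real.exp (d * x + -(d * x₁))),
    (Real.exp_pos (-d * (x₁ - x))).le]

lemma whole_line_contra {η lam : ℝ} {v : ℝ → ℝ} (hv : IsFiberEigenfun η lam v)
    {B2 d : ℝ} (hd : 0 < d) (hdB : B2 < d)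
    (hpt : ∀ t, 0 ≤ t → (v t) ^ 2 ≤ B2 * Real.exp (-d * t)) : False := by
  have hint2 : IntegrableOn (fun t : ℝ => B2 * Real.exp (-d * t)) (Ioi 0) :=
    (exp_neg_integrableOn_Ioi 0 hd).const_mul B2
  have hmono : ∫ t in Ioi (0:ℝ), (v t) ^ 2 ≤ ∫ t in Ioi (0:ℝ), B2 * Real.exp (-d * t) := by
    apply setIntegral_mono_on hv.2.2.1 hint2 measurableSet_Ioi
    intro t ht
    exact hpt t (le_of_lt ht)
  rw [hv.2.2.2] at hmono
  have hval : ∫ t in Ioi (0:ℝ), B2 * Real.exp (-d * t) = B2 * d⁻¹ := by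
    rw [integral_const_mul]
    have h1 : ∫ t in Ioi (0:ℝ), Real.exp (-d * t) = ∫ t in Ioi (0:ℝ), Real.exp (-(d * t)) := by
      congr 1; funext t; ring_nf
    rw [h1]
    have h2 := integral_comp_mul_left_Ioi (fun x => Real.exp (-x)) 0 hd
    simp only [mul_zero] at h2
    rw [h2, integral_exp_neg_Ioi]
    simp [smul_eq_mul]
  rw [hval] at hmono
  have hB2 : 0 ≤ B2 := le_trans (sq_nonneg (v 0)) (by simpa using hpt 0 le_rfl)
  have : B2 * d⁻¹ < 1 := by
    rw [← mul_inv_cancel₀ (ne_of_gt hd)]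
    exact mul_lt_mul_of_pos_right hdB (inv_pos.mpr hd)
  linarith

set_option maxHeartbeats 3000000 in
/-- pointwise decay of half-line oscillator eigenfunctions away from
the turning region: for each `n`, `s` and each bound `C` on the eigenvalue there is a
constant `C'` such that whenever `|x - η| ≥ ε(x + |η|)` one has
`|u_n(x,η)| ≤ C'(1 + x + |η|)^{-s}`. -/
theorem eigenfunction_decay_away_from_turning_region
    (lam : ℕ → ℝ → ℝ) (u : ℕ → ℝ → ℝ → ℝ)
    (hu : ∀ (n : ℕ) (η : ℝ), IsFiberEigenfun η (lam n η) (u n η))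
    (hbc : (∀ (n : ℕ) (η : ℝ), u n η 0 = 0) ∨ (∀ (n : ℕ) (η : ℝ), deriv (u n η) 0 = 0))
    (n : ℕ) (s C ε : ℝ) (hε : 0 < ε) :
    ∃ C' : ℝ, ∀ η x : ℝ, lam n η ≤ C → 0 ≤ x → ε * (x + |η|) ≤ |x - η| →
      |u n η x| ≤ C' * (1 + x + |η|) ^ (-s) := by
  obtain ⟨Cp, hCpdef⟩ : ∃ y : ℝ, y = max C 0 := ⟨_, rfl⟩
  have hCp0 : 0 ≤ Cp := by rw [hCpdef]; exact le_max_right _ _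
  obtain ⟨B2, hB2def⟩ : ∃ y : ℝ, y = Cp + 2 := ⟨_, rfl⟩
  have hB2pos : 0 < B2 := by rw [hB2def]; linarith
  obtain ⟨sqC, hsqCdef⟩ : ∃ y : ℝ, y = Real.sqrt Cp := ⟨_, rfl⟩
  have hsqC0 : 0 ≤ sqC := by rw [hsqCdef]; exact Real.sqrt_nonneg _
  have hsqCsq : sqC ^ 2 = Cp := by rw [hsqCdef]; exact Real.sq_sqrt hCp0
  obtain ⟨sp, hspdef⟩ : ∃ y : ℝ, y = max s 0 := ⟨_, rfl⟩
  have hsp0 : 0 ≤ sp := by rw [hspdef]; exact le_max_right _ _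
  have hssp : s ≤ sp := by rw [hspdef]; exact le_max_left _ _
  obtain ⟨M, hMdef⟩ : ∃ y : ℝ,
      y = 1 + 8 * sqC / ε + 8 * (Cp + 3) / ε + 64 * (2 * sp + 1) / ε ^ 2 := ⟨_, rfl⟩
  have hM1 : 1 ≤ M := by
    have h1 : 0 ≤ 8 * sqC / ε := by positivity
    have h2 : 0 ≤ 8 * (Cp + 3) / ε := by positivity
    have h3 : 0 ≤ 64 * (2 * sp + 1) / ε ^ 2 := by positivity
    rw [hMdef]; linarith
  obtain ⟨c, hcdef⟩ : ∃ y : ℝ, y = ε ^ 2 / 64 := ⟨_, rfl⟩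
  have hc0 : 0 < c := by rw [hcdef]; positivity
  refine ⟨Real.sqrt (2 * B2) * (1 + M) ^ |s|, ?_⟩
  intro η x hlam hx hsep
  set v := u n η with hvdef
  set lamv := lam n η with hlamvdef
  have hvv : IsFiberEigenfun η lamv v := hu n η
  have hlamCp : lamv ≤ Cp := by rw [hCpdef]; exact le_trans hlam (le_max_left _ _)
  have hbcv : v 0 * deriv v 0 = 0 := by
    rcases hbc with h | h
    · rw [hvdef, h n η, zero_mul]
    · rw [hvdef, h n η, mul_zero]
  have hbc2 : v 0 = 0 ∨ deriv v 0 = 0 := by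
    rcases hbc with h | h
    · exact Or.inl (h n η)
    · exact Or.inr (h n η)
  have hsup : ∀ t, 0 ≤ t → (v t) ^ 2 ≤ B2 := by
    intro t ht
    have := sup_bound hvv hbcv hlam t ht
    rw [hB2def, hCpdef]
    exact this
  obtain ⟨R, hRdef⟩ : ∃ y : ℝ, y = x + |η| := ⟨_, rfl⟩
  replace hsep : ε * R ≤ |x - η| := by rw [hRdef]; exact hsep
  have hR0 : 0 ≤ R := by rw [hRdef]; exact add_nonneg hx (abs_nonneg _)
  have hbase : (1:ℝ) ≤ 1 + R := by linarith
  have hbasepos : (0:ℝ) < 1 + R := by linarith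
  rw [show (1:ℝ) + x + |η| = 1 + R from by rw [hRdef]; ring]
  have hrpow_nonneg : 0 ≤ (1 + R) ^ (-s) := (Real.rpow_pos_of_pos hbasepos _).le
  have hone_le : (1:ℝ) ≤ (1 + M) ^ |s| := by
    have := Real.rpow_le_rpow_of_exponent_le (by linarith : (1:ℝ) ≤ 1 + M)
      (abs_nonneg s)
    rwa [Real.rpow_zero] at this
  have hCge : Real.sqrt (2 * B2) ≤ Real.sqrt (2 * B2) * (1 + M) ^ |s| :=
    le_mul_of_one_le_right (Real.sqrt_nonneg _) hone_le
  rcases le_or_gt R M with hRM | hRM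
  · -- bounded region
    have habs : |v x| ≤ Real.sqrt B2 := by
      rw [← Real.sqrt_sq_eq_abs]
      exact Real.sqrt_le_sqrt (hsup x hx)
    have h1 : (1 + R) ^ (-|s|) ≤ (1 + R) ^ (-s) :=
      Real.rpow_le_rpow_of_exponent_le hbase (neg_le_neg (le_abs_self s))
    have h2 : (1 + R) ^ |s| ≤ (1 + M) ^ |s| :=
      Real.rpow_le_rpow (by linarith) (by linarith) (abs_nonneg s)
    have h3 : ((1 + M) ^ |s|)⁻¹ ≤ (1 + R) ^ (-|s|) := by
      rw [Real.rpow_neg (by linarith)]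
      exact inv_anti₀ (Real.rpow_pos_of_pos hbasepos _) h2
    have h4 : (1:ℝ) ≤ (1 + M) ^ |s| * (1 + R) ^ (-|s|) := by
      have h5 : (0:ℝ) < (1 + M) ^ |s| := by linarith
      calc (1:ℝ) = (1 + M) ^ |s| * ((1 + M) ^ |s|)⁻¹ := by
            rw [mul_inv_cancel₀ (ne_of_gt h5)]
        _ ≤ (1 + M) ^ |s| * (1 + R) ^ (-|s|) :=
            mul_le_mul_of_nonneg_left h3 (by linarith)
    have h6 : Real.sqrt B2 ≤ Real.sqrt (2 * B2) := Real.sqrt_le_sqrt (by linarith)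
    calc |v x| ≤ Real.sqrt B2 := habs
      _ = Real.sqrt B2 * 1 := (mul_one _).symm
      _ ≤ Real.sqrt B2 * ((1 + M) ^ |s| * (1 + R) ^ (-|s|)) :=
          mul_le_mul_of_nonneg_left h4 (Real.sqrt_nonneg _)
      _ ≤ Real.sqrt B2 * ((1 + M) ^ |s| * (1 + R) ^ (-s)) := by
          apply mul_le_mul_of_nonneg_left _ (Real.sqrt_nonneg _)
          apply mul_le_mul_of_nonneg_left h1 (by positivity)
      _ ≤ Real.sqrt (2 * B2) * ((1 + M) ^ |s| * (1 + R) ^ (-s)) := by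
          apply mul_le_mul_of_nonneg_right h6 (by positivity)
      _ = Real.sqrt (2 * B2) * (1 + M) ^ |s| * (1 + R) ^ (-s) := by ring
  · -- decay region
    obtain ⟨d, hddef⟩ : ∃ y : ℝ, y = ε * R / 4 := ⟨_, rfl⟩
    have hRpos : (0:ℝ) < R := by linarith
    have hd : 0 < d := by rw [hddef]; positivity
    have hsqCR : sqC ≤ ε * R / 8 := by
      have h1 : 8 * sqC / ε ≤ M := by
        have h2 : 0 ≤ 64 * (2 * sp + 1) / ε ^ 2 := by positivity
        have h3 : 0 ≤ 8 * (Cp + 3) / ε := by positivity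
        rw [hMdef]; linarith
      rw [div_le_iff₀ hε] at h1
      linarith [mul_pos (sub_pos.mpr hRM) hε]
    have hB2d : B2 + 1 ≤ ε * R / 8 := by
      have h1 : 8 * (Cp + 3) / ε ≤ M := by
        have h2 : 0 ≤ 64 * (2 * sp + 1) / ε ^ 2 := by positivity
        have h3 : 0 ≤ 8 * sqC / ε := by positivity
        rw [hMdef]; linarith
      rw [div_le_iff₀ hε] at h1
      linarith [mul_pos (sub_pos.mpr hRM) hε, hB2def]
    have hspR : 2 * sp + 1 ≤ c * R := by
      have h1 : 64 * (2 * sp + 1) / ε ^ 2 ≤ M := by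
        have h2 : 0 ≤ 8 * (Cp + 3) / ε := by positivity
        have h3 : 0 ≤ 8 * sqC / ε := by positivity
        rw [hMdef]; linarith
      rw [div_le_iff₀ (by positivity : (0:ℝ) < ε ^ 2)] at h1
      rw [hcdef]
      linarith [mul_pos (sub_pos.mpr hRM) (pow_pos hε 2)]
    have hq' : ∀ t : ℝ, sqC + d ≤ t - η → lamv + d ^ 2 ≤ (η - t) ^ 2 := by
      intro t ht
      have h0 : (0:ℝ) ≤ sqC + d := by linarith
      have h1 : (sqC + d) ^ 2 ≤ (t - η) ^ 2 := pow_le_pow_left₀ h0 ht 2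
      have h2 : (η - t) ^ 2 = (t - η) ^ 2 := by ring
      rw [h2]
      nlinarith [mul_nonneg hsqC0 hd.le]
    have hq'' : ∀ t : ℝ, sqC + d ≤ η - t → lamv + d ^ 2 ≤ (η - t) ^ 2 := by
      intro t ht
      have h0 : (0:ℝ) ≤ sqC + d := by linarith
      have h1 : (sqC + d) ^ 2 ≤ (η - t) ^ 2 := pow_le_pow_left₀ h0 ht 2
      nlinarith [mul_nonneg hsqC0 hd.le]
    have hkey : (v x) ^ 2 ≤ 2 * B2 * Real.exp (-d * (ε * R / 8)) := by
      rcases lt_or_ge η 0 with hη | hη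
      · -- η negative
        have habsη : |η| = -η := abs_of_neg hη
        obtain ⟨x₀, hx₀def⟩ : ∃ y : ℝ, y = max 0 (η + sqC + d) := ⟨_, rfl⟩
        have hx₀0 : 0 ≤ x₀ := by rw [hx₀def]; exact le_max_left _ _
        have hx₀ge : η + sqC + d ≤ x₀ := by rw [hx₀def]; exact le_max_right _ _
        have hq : ∀ t, x₀ ≤ t → lamv + d ^ 2 ≤ (η - t) ^ 2 := by
          intro t ht
          exact hq' t (by linarith)
        have hrd := right_decay hvv hsup hd hx₀0 hq
        have hε1 : ε ≤ 1 := by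
          have h1 : |x - η| = R := by
            rw [abs_of_nonneg (by linarith : (0:ℝ) ≤ x - η), hRdef, habsη]; ring
          rw [h1] at hsep
          nlinarith
        rcases le_or_gt (x₀ + ε * R / 8) x with hcase | hcase
        · have h1 := hrd x (by linarith)
          have h2 : Real.exp (-d * (x - x₀)) ≤ Real.exp (-d * (ε * R / 8)) :=
            Real.exp_le_exp.mpr (by nlinarith)
          nlinarith [Real.exp_pos (-d * (ε * R / 8)), Real.exp_pos (-d * (x - x₀))]
        · exfalso
          have hx₀eq : x₀ = 0 := by
            rcases le_or_gt (η + sqC + d) 0 with h1 | h1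
            · rw [hx₀def]; exact max_eq_left h1
            · exfalso
              have h2 : x₀ ≤ sqC + d := by
                rw [hx₀def]
                exact max_le (by positivity) (by linarith)
              have hd8 : d ≤ R / 4 := by rw [hddef]; nlinarith
              have hsq8 : sqC ≤ R / 8 := by nlinarith
              have h6 : R = x + -η := by rw [hRdef, habsη]
              linarith
          have hpt : ∀ t, 0 ≤ t → (v t) ^ 2 ≤ B2 * Real.exp (-d * t) := by
            intro t ht
            have := hrd t (by rw [hx₀eq]; exact ht)
            rw [hx₀eq, sub_zero] at this
            exact this
          exact whole_line_contra hvv hd (by linarith) hpt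
      · -- η nonneg
        have habsη : |η| = η := abs_of_nonneg hη
        rcases le_or_gt η x with hxη | hxη
        · -- right of turning region
          have hsep' : ε * R ≤ x - η := by
            rw [abs_of_nonneg (by linarith : (0:ℝ) ≤ x - η)] at hsep
            linarith
          obtain ⟨x₀, hx₀def⟩ : ∃ y : ℝ, y = η + sqC + d := ⟨_, rfl⟩
          have hx₀0 : 0 ≤ x₀ := by rw [hx₀def]; positivity
          have hq : ∀ t, x₀ ≤ t → lamv + d ^ 2 ≤ (η - t) ^ 2 := by
            intro t ht
            rw [hx₀def] at ht
            exact hq' t (by linarith)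
          have hxx₀ : x₀ + ε * R / 8 ≤ x := by
            rw [hx₀def, hddef]
            linarith [hsqCR, hsep']
          have h1 := right_decay hvv hsup hd hx₀0 hq x (by linarith)
          have h2 : Real.exp (-d * (x - x₀)) ≤ Real.exp (-d * (ε * R / 8)) :=
            Real.exp_le_exp.mpr (by nlinarith)
          nlinarith [Real.exp_pos (-d * (ε * R / 8)), Real.exp_pos (-d * (x - x₀))]
        · -- left of turning region
          have hsep' : ε * R ≤ η - x := by
            rw [abs_of_neg (by linarith : x - η < 0)] at hsep
            linarith
          obtain ⟨x₁, hx₁def⟩ : ∃ y : ℝ, y = η - sqC - d := ⟨_, rfl⟩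
          have hq : ∀ t, 0 ≤ t → t ≤ x₁ → lamv + d ^ 2 ≤ (η - t) ^ 2 := by
            intro t _ ht2
            rw [hx₁def] at ht2
            exact hq'' t (by linarith)
          have hxx₁ : x + ε * R / 8 ≤ x₁ := by
            rw [hx₁def, hddef]
            linarith [hsqCR, hsep']
          have h1 := left_decay hvv hbc2 hsup hd hq x hx (by linarith)
          have h2 : Real.exp (-d * (x₁ - x)) ≤ Real.exp (-d * (ε * R / 8)) :=
            Real.exp_le_exp.mpr (by nlinarith)
          nlinarith [Real.exp_pos (-d * (ε * R / 8)), Real.exp_pos (-d * (x₁ - x)), hB2pos]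
    -- convert to polynomial decay
    have habs2 : |v x| ≤ Real.sqrt (2 * B2) * Real.exp (-(c * R ^ 2)) := by
      rw [← Real.sqrt_sq_eq_abs]
      have h1 : Real.sqrt ((v x) ^ 2) ≤ Real.sqrt (2 * B2 * Real.exp (-d * (ε * R / 8))) :=
        Real.sqrt_le_sqrt hkey
      have h2 : 2 * B2 * Real.exp (-d * (ε * R / 8))
          = (Real.sqrt (2 * B2) * Real.exp (-(c * R ^ 2))) ^ 2 := by
        rw [mul_pow, Real.sq_sqrt (by positivity : (0:ℝ) ≤ 2 * B2)]
        congr 1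
        rw [sq, ← Real.exp_add]
        congr 1
        rw [hddef, hcdef]
        ring
      rw [h2] at h1
      rwa [Real.sqrt_sq (show (0:ℝ) ≤ Real.sqrt (2 * B2) * Real.exp (-(c * R ^ 2)) by
        positivity)] at h1
    have hpoly : Real.exp (-(c * R ^ 2)) ≤ (1 + R) ^ (-s) := by
      have h2 : (1 + R) ^ sp ≤ Real.exp (c * R ^ 2) := by
        calc (1 + R) ^ sp ≤ (Real.exp R) ^ sp :=
              Real.rpow_le_rpow (by linarith) (by linarith [Real.add_one_le_exp R]) hsp0
          _ = Real.exp (R * sp) := (Real.exp_mul R sp).symm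
          _ ≤ Real.exp (c * R ^ 2) := by
              apply Real.exp_le_exp.mpr
              nlinarith [hspR, hR0, hsp0]
      have h3 : Real.exp (-(c * R ^ 2)) ≤ (1 + R) ^ (-sp) := by
        rw [Real.exp_neg, Real.rpow_neg (by linarith)]
        exact inv_anti₀ (Real.rpow_pos_of_pos hbasepos _) h2
      refine le_trans h3 (Real.rpow_le_rpow_of_exponent_le hbase ?_)
      exact neg_le_neg hssp
    calc |v x| ≤ Real.sqrt (2 * B2) * Real.exp (-(c * R ^ 2)) := habs2
      _ ≤ Real.sqrt (2 * B2) * (1 + R) ^ (-s) :=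
          mul_le_mul_of_nonneg_left hpoly (Real.sqrt_nonneg _)
      _ ≤ Real.sqrt (2 * B2) * (1 + M) ^ |s| * (1 + R) ^ (-s) :=
          mul_le_mul_of_nonneg_right hCge hrpow_nonneg
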